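/- Let B be a bialgebra over K with unit e₂, and let B' = K·e₁ ⊕ B be the algebra obtained by adjoining a new unit e₁ (so e₁·x = x·e₁ = x for all x ∈ B'). Extend the comultiplication by Δ(e₁) = (e₁−e₂)⊗(e₁−e₂) + e₂⊗e₂ and the counit by ε(e₁) = 2. Then Δ : B' → B'⊗B' is coassociative and multiplicative (Δ(x·y) = Δ(x)•Δ(y)), and ε satisfies the counit axioms on B'. -/

import Mathlib

open TensorProduct Unitization

set_option maxHeartbeats 2000000 in
set_option synthInstance.maxHeartbeats 500000 in
/-- extending the comultiplication and counit of a bialgebra `B`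
to its unitalization `B' = K·e₁ ⊕ B` by `Δ(e₁) = (e₁−e₂)⊗(e₁−e₂) + e₂⊗e₂`
and `ε(e₁) = 2` yields a coassociative, multiplicative `Δ` and a counit `ε`. -/
theorem stmt14 (K B : Type*) [Field K] [CharZero K] [Ring B] [Bialgebra K B]
    (Δ : Unitization K B →ₗ[K] Unitization K B ⊗[K] Unitization K B)
    (ε : Unitization K B →ₗ[K] K)
    (hΔ1 : Δ 1 = ((1 : Unitization K B) - inr (1 : B)) ⊗ₜ[K]
        ((1 : Unitization K B) - inr (1 : B)) + (inr (1 : B)) ⊗ₜ[K] (inr (1 : B)))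
    (hΔr : ∀ b : B, Δ (inr b)
        = TensorProduct.map (inrHom K K B) (inrHom K K B) (Coalgebra.comul b))
    (hε1 : ε 1 = 2)
    (hεr : ∀ b : B, ε (inr b) = Coalgebra.counit b) :
    -- coassociativity
    (∀ v : Unitization K B,
        (TensorProduct.assoc K (Unitization K B) (Unitization K B) (Unitization K B))
            (TensorProduct.map Δ LinearMap.id (Δ v))
          = TensorProduct.map LinearMap.id Δ (Δ v))
    -- multiplicativity
    ∧ (∀ x y : Unitization K B, Δ (x * y) = Δ x * Δ y)
    -- counit axioms
    ∧ (∀ v : Unitization K B,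
        (TensorProduct.lid K (Unitization K B))
            (TensorProduct.map ε LinearMap.id (Δ v)) = v
        ∧ (TensorProduct.rid K (Unitization K B))
            (TensorProduct.map LinearMap.id ε (Δ v)) = v) := by
  classical
  set iL : B →ₗ[K] Unitization K B := (inrHom K K B : B →ₗ[K] Unitization K B) with hiL
  set g : B ⊗[K] B →ₗ[K] Unitization K B ⊗[K] Unitization K B := TensorProduct.map iL iL with hg
  have hiLapp : ∀ b : B, iL b = inr b := fun b => rfl
  set e : Unitization K B := inr (1 : B) with he
  set u : Unitization K B := 1 - e with hu
  -- basic multiplicative facts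
  have hee : e * e = e := by rw [he, ← Unitization.inr_mul, mul_one]
  have he_inr : ∀ b : B, e * inr b = inr b := by
    intro b; rw [he, ← Unitization.inr_mul, one_mul]
  have hinr_e : ∀ b : B, inr b * e = inr b := by
    intro b; rw [he, ← Unitization.inr_mul, mul_one]
  have hu_inr : ∀ b : B, u * inr b = 0 := by
    intro b; rw [hu, sub_mul, one_mul, he_inr, sub_self]
  have hinr_u : ∀ b : B, inr b * u = 0 := by
    intro b; rw [hu, mul_sub, mul_one, hinr_e, sub_self]
  have hue : u * e = 0 := by rw [hu, sub_mul, one_mul, hee, sub_self]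
  have heu : e * u = 0 := by rw [hu, mul_sub, mul_one, hee, sub_self]
  have huu : u * u = u := by
    rw [hu, sub_mul, one_mul, mul_sub, mul_one, hee, sub_self, sub_zero]
  -- comultiplication facts
  have hΔe : Δ e = e ⊗ₜ[K] e := by
    rw [he, hΔr, Bialgebra.comul_one, Algebra.TensorProduct.one_def, TensorProduct.map_tmul]
    rfl
  have hΔ1' : Δ 1 = u ⊗ₜ[K] u + e ⊗ₜ[K] e := hΔ1
  have hΔu : Δ u = u ⊗ₜ[K] u := by
    rw [hu, map_sub, hΔ1', hΔe, add_sub_cancel_right]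
  have hΔig : ∀ b : B, Δ (inr b) = g (Coalgebra.comul b) := fun b => hΔr b
  have hΔiL : Δ ∘ₗ iL = g ∘ₗ (Coalgebra.comul : B →ₗ[K] B ⊗[K] B) := by
    apply LinearMap.ext; intro b
    simpa [hiLapp] using hΔig b
  have mulAdd : ∀ a b c : Unitization K B ⊗[K] Unitization K B,
      a * (b + c) = a * b + a * c := fun a b c => Distrib.left_distrib a b c
  have addMul : ∀ a b c : Unitization K B ⊗[K] Unitization K B,
      (a + b) * c = a * c + b * c := fun a b c => Distrib.right_distrib a b c
  have zeroMul : ∀ a : Unitization K B ⊗[K] Unitization K B, 0 * a = 0 :=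
    fun a => zero_mul a
  have mulZero : ∀ a : Unitization K B ⊗[K] Unitization K B, a * 0 = 0 :=
    fun a => mul_zero a
  -- multiplicativity of g
  have hgmul : ∀ s t : B ⊗[K] B, g (s * t) = g s * g t := by
    intro s t
    induction s using TensorProduct.induction_on with
    | zero => rw [zero_mul, map_zero, zeroMul]
    | tmul a b =>
      induction t using TensorProduct.induction_on with
      | zero => rw [mul_zero, map_zero, mulZero]
      | tmul c d =>
        rw [Algebra.TensorProduct.tmul_mul_tmul, hg, TensorProduct.map_tmul,
          TensorProduct.map_tmul, TensorProduct.map_tmul,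
          Algebra.TensorProduct.tmul_mul_tmul]
        simp only [hiLapp, Unitization.inr_mul]
      | add t₁ t₂ h1 h2 => rw [mul_add, map_add, h1, h2, map_add, mulAdd]
    | add s₁ s₂ h1 h2 => rw [add_mul, map_add, h1, h2, map_add, addMul]
  -- Δ1 is a left/right unit for the image of g
  have hΔ1g : ∀ s : B ⊗[K] B, Δ 1 * g s = g s := by
    intro s
    induction s using TensorProduct.induction_on with
    | zero => rw [map_zero, mulZero]
    | tmul a b =>
      rw [hΔ1', hg, TensorProduct.map_tmul, addMul, Algebra.TensorProduct.tmul_mul_tmul,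
        Algebra.TensorProduct.tmul_mul_tmul]
      simp only [hiLapp, hu_inr, he_inr, TensorProduct.zero_tmul, zero_add]
    | add s₁ s₂ h1 h2 => rw [map_add, mulAdd, h1, h2]
  have hgΔ1 : ∀ s : B ⊗[K] B, g s * Δ 1 = g s := by
    intro s
    induction s using TensorProduct.induction_on with
    | zero => rw [map_zero, zeroMul]
    | tmul a b =>
      rw [hΔ1', hg, TensorProduct.map_tmul, mulAdd, Algebra.TensorProduct.tmul_mul_tmul,
        Algebra.TensorProduct.tmul_mul_tmul]
      simp only [hiLapp, hinr_u, hinr_e, TensorProduct.zero_tmul, zero_add]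
    | add s₁ s₂ h1 h2 => rw [map_add, addMul, h1, h2]
  have hΔ11 : Δ 1 * Δ 1 = Δ 1 := by
    rw [hΔ1']
    rw [addMul, mulAdd, mulAdd, Algebra.TensorProduct.tmul_mul_tmul,
      Algebra.TensorProduct.tmul_mul_tmul, Algebra.TensorProduct.tmul_mul_tmul,
      Algebra.TensorProduct.tmul_mul_tmul, huu, hue, heu, hee]
    simp
  -- counit facts
  have hεe : ε e = 1 := by rw [he, hεr, Bialgebra.counit_one]
  have hεu : ε u = 1 := by
    rw [hu, map_sub, hε1, hεe]; norm_num
  have hεiL : ε ∘ₗ iL = (Coalgebra.counit : B →ₗ[K] K) := by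
    apply LinearMap.ext; intro b; simpa [hiLapp] using hεr b
  have hinlsmul : ∀ v : Unitization K B, (inl v.fst : Unitization K B) = v.fst • 1 := by
    intro v
    rw [← Unitization.algebraMap_eq_inl, Algebra.algebraMap_eq_smul_one]
  refine ⟨?_, ?_, ?_⟩
  · -- coassociativity
    have base1 : (TensorProduct.assoc K (Unitization K B) (Unitization K B) (Unitization K B))
        (TensorProduct.map Δ LinearMap.id (Δ 1))
        = TensorProduct.map LinearMap.id Δ (Δ 1) := by
      rw [hΔ1']
      simp only [map_add, TensorProduct.map_tmul, LinearMap.id_coe, id_eq,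
        TensorProduct.assoc_tmul, hΔu, hΔe]
    have h1 : TensorProduct.map Δ (LinearMap.id (M := Unitization K B)) ∘ₗ g
        = TensorProduct.map g iL ∘ₗ
          TensorProduct.map (Coalgebra.comul) (LinearMap.id (M := B)) := by
      rw [hg, ← TensorProduct.map_comp, ← TensorProduct.map_comp, hΔiL,
        LinearMap.id_comp, LinearMap.comp_id]
    have h2 : TensorProduct.map (LinearMap.id (M := Unitization K B)) Δ ∘ₗ g
        = TensorProduct.map iL g ∘ₗ
          TensorProduct.map (LinearMap.id (M := B)) (Coalgebra.comul) := by
      rw [hg, ← TensorProduct.map_comp, ← TensorProduct.map_comp, hΔiL,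
        LinearMap.id_comp, LinearMap.comp_id]
    have base2 : ∀ b : B, (TensorProduct.assoc K (Unitization K B) (Unitization K B) (Unitization K B))
        (TensorProduct.map Δ LinearMap.id (Δ (inr b)))
        = TensorProduct.map LinearMap.id Δ (Δ (inr b)) := by
      intro b
      have hco := Coalgebra.coassoc_apply (R := K) b
      simp only [LinearMap.rTensor, LinearMap.lTensor] at hco
      have hL := LinearMap.congr_fun h1 (Coalgebra.comul b)
      have hR := LinearMap.congr_fun h2 (Coalgebra.comul b)
      simp only [LinearMap.comp_apply] at hL hR
      rw [hΔig b, hL, hR, hg, ← TensorProduct.map_map_assoc, hco]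
    intro v
    rw [← Unitization.inl_fst_add_inr_snd_eq v, hinlsmul v]
    simp only [map_add, map_smul]
    rw [base1, base2 v.snd]
  · -- multiplicativity
    intro x y
    obtain ⟨k, b, rfl⟩ : ∃ k b, x = inl k + inr b :=
      ⟨x.fst, x.snd, (Unitization.inl_fst_add_inr_snd_eq x).symm⟩
    obtain ⟨l, c, rfl⟩ : ∃ l c, y = inl l + inr c :=
      ⟨y.fst, y.snd, (Unitization.inl_fst_add_inr_snd_eq y).symm⟩
    have hk : (inl k : Unitization K B) = k • 1 := by
      rw [← Unitization.algebraMap_eq_inl, Algebra.algebraMap_eq_smul_one]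
    have hl : (inl l : Unitization K B) = l • 1 := by
      rw [← Unitization.algebraMap_eq_inl, Algebra.algebraMap_eq_smul_one]
    rw [hk, hl]
    have expand : (k • (1 : Unitization K B) + inr b) * (l • (1 : Unitization K B) + inr c)
        = (k * l) • (1 : Unitization K B) + k • inr c + l • inr b + inr (b * c) := by
      rw [add_mul, smul_mul_assoc, one_mul, smul_add, smul_smul, mul_add,
        mul_smul_comm, mul_one, ← Unitization.inr_mul]
      abel
    rw [expand]
    simp only [map_add, map_smul]
    rw [hΔig b, hΔig c, hΔig (b * c), Bialgebra.comul_mul, hgmul]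
    simp only [addMul, mulAdd, smul_mul_assoc, mul_smul_comm, smul_add, smul_smul]
    rw [hΔ11, hΔ1g, hgΔ1, mul_comm l k]
    abel
  · -- counit axioms
    have lid_aux : ∀ s : B ⊗[K] B,
        (TensorProduct.lid K (Unitization K B)) (TensorProduct.map (Coalgebra.counit) iL s)
          = iL ((TensorProduct.lid K B)
              (TensorProduct.map (Coalgebra.counit) LinearMap.id s)) := by
      intro s
      induction s using TensorProduct.induction_on with
      | zero => simp
      | tmul a b => simp
      | add s₁ s₂ h1 h2 => simp only [map_add, h1, h2]
    have rid_aux : ∀ s : B ⊗[K] B,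
        (TensorProduct.rid K (Unitization K B)) (TensorProduct.map iL (Coalgebra.counit) s)
          = iL ((TensorProduct.rid K B)
              (TensorProduct.map LinearMap.id (Coalgebra.counit) s)) := by
      intro s
      induction s using TensorProduct.induction_on with
      | zero => simp
      | tmul a b => simp
      | add s₁ s₂ h1 h2 => simp only [map_add, h1, h2]
    have hmapε : TensorProduct.map ε (LinearMap.id (M := Unitization K B)) ∘ₗ g
        = TensorProduct.map (Coalgebra.counit) iL := by
      rw [hg, ← TensorProduct.map_comp, hεiL, LinearMap.id_comp]
    have hmapε' : TensorProduct.map (LinearMap.id (M := Unitization K B)) ε ∘ₗ g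
        = TensorProduct.map iL (Coalgebra.counit) := by
      rw [hg, ← TensorProduct.map_comp, hεiL, LinearMap.id_comp]
    have base1l : (TensorProduct.lid K (Unitization K B))
        (TensorProduct.map ε LinearMap.id (Δ 1)) = 1 := by
      rw [hΔ1']
      simp only [map_add, TensorProduct.map_tmul, LinearMap.id_coe, id_eq,
        TensorProduct.lid_tmul, hεu, hεe, one_smul]
      rw [hu]; abel
    have base1r : (TensorProduct.rid K (Unitization K B))
        (TensorProduct.map LinearMap.id ε (Δ 1)) = 1 := by
      rw [hΔ1']
      simp only [map_add, TensorProduct.map_tmul, LinearMap.id_coe, id_eq,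
        TensorProduct.rid_tmul, hεu, hεe, one_smul]
      rw [hu]; abel
    have base2l : ∀ b : B, (TensorProduct.lid K (Unitization K B))
        (TensorProduct.map ε LinearMap.id (Δ (inr b))) = inr b := by
      intro b
      rw [hΔig b, ← LinearMap.comp_apply, hmapε, lid_aux]
      have hcb : (TensorProduct.map (Coalgebra.counit) (LinearMap.id (M := B)))
          (Coalgebra.comul b) = (1 : K) ⊗ₜ[K] b := by
        simpa [LinearMap.rTensor] using Coalgebra.rTensor_counit_comul (R := K) b
      rw [hcb]
      simp [hiLapp]
    have base2r : ∀ b : B, (TensorProduct.rid K (Unitization K B))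
        (TensorProduct.map LinearMap.id ε (Δ (inr b))) = inr b := by
      intro b
      rw [hΔig b, ← LinearMap.comp_apply, hmapε', rid_aux]
      have hcb : (TensorProduct.map (LinearMap.id (M := B)) (Coalgebra.counit))
          (Coalgebra.comul b) = b ⊗ₜ[K] (1 : K) := by
        simpa [LinearMap.lTensor] using Coalgebra.lTensor_counit_comul (R := K) b
      rw [hcb]
      simp [hiLapp]
    intro v
    constructor
    · conv_lhs => rw [← Unitization.inl_fst_add_inr_snd_eq v, hinlsmul v]
      rw [map_add, map_smul, map_add, map_smul, map_add, map_smul,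
        base1l, base2l v.snd, ← hinlsmul v, Unitization.inl_fst_add_inr_snd_eq]
    · conv_lhs => rw [← Unitization.inl_fst_add_inr_snd_eq v, hinlsmul v]
      rw [map_add, map_smul, map_add, map_smul, map_add, map_smul,
        base1r, base2r v.snd, ← hinlsmul v, Unitization.inl_fst_add_inr_snd_eq]
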